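/- arXiv:1704.07855 — 3 statements merged into one kernel-verified Lean document; each statement's English description precedes it below -/
import Mathlib

section
/- Let k be a field of characteristic p > 2 and W = W(k) its ring of Witt vectors. Consider the W-algebra A = W[b]/(b - p·b², 2 - 2·p·b). Then A is isomorphic to W[1/p] = Frac(W) as a W-algebra, and in particular A is not finitely generated as a W-module. -/
open Polynomial

namespace WittAux

variable (p : ℕ) [hp : Fact p.Prime] (k : Type*) [Field k] [CharP k p]

local notation "W" => WittVector p k

lemma verschiebung_one_eq : WittVector.verschiebung (1 : W) = (p : W) := by
  simpa using WittVector.verschiebung_frobenius (p := p) (1 : W)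

lemma frobenius_p : WittVector.frobenius ((p : W)) = (p : W) := by
  conv_lhs => rw [← verschiebung_one_eq p k]
  rw [WittVector.frobenius_verschiebung, one_mul]

lemma frobenius_p_pow (n : ℕ) : WittVector.frobenius ((p : W) ^ n) = (p : W) ^ n := by
  rw [map_pow, frobenius_p]

lemma verschiebung_p_pow (n : ℕ) :
    WittVector.verschiebung ((p : W) ^ n) = (p : W) ^ (n + 1) := by
  conv_lhs => rw [← frobenius_p_pow p k n]
  rw [WittVector.verschiebung_frobenius, pow_succ]

lemma iterate_verschiebung_one (n : ℕ) :
    WittVector.verschiebung^[n] (1 : W) = (p : W) ^ n := by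
  induction n with
  | zero => simp
  | succ m ih =>
    rw [Function.iterate_succ_apply', ih, verschiebung_p_pow]

/-- Every nonzero Witt vector divides a power of `p`. -/
lemma exists_mul_eq_pow (a : W) (ha : a ≠ 0) : ∃ (b : W) (n : ℕ), a * b = (p : W) ^ n := by
  obtain ⟨m, c, hc, rfl⟩ := WittVector.verschiebung_nonzero ha
  have hcu : IsUnit c := WittVector.isUnit_of_coeff_zero_ne_zero c hc
  obtain ⟨u, rfl⟩ := hcu
  refine ⟨WittVector.verschiebung^[m] ((u⁻¹ : _) : W), m + m, ?_⟩
  rw [WittVector.iterate_verschiebung_mul, ← iterate_map_mul, Units.mul_inv, iterate_map_one,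
    iterate_verschiebung_one]

lemma isLocalization_powers :
    IsLocalization (Submonoid.powers ((p : W))) (FractionRing W) := by
  have hinj := IsFractionRing.injective W (FractionRing W)
  have hp0 : (p : W) ≠ 0 := (WittVector.irreducible p).ne_zero
  rw [isLocalization_iff]
  refine ⟨?_, ?_, ?_⟩
  · rintro ⟨y, n, rfl⟩
    simp only
    rw [isUnit_iff_ne_zero]
    intro h
    exact pow_ne_zero n hp0 (hinj (by simpa using h))
  · intro z
    obtain ⟨⟨x, s⟩, hs⟩ := IsLocalization.surj (nonZeroDivisors W) z
    have hs0 : (s : W) ≠ 0 := nonZeroDivisors.coe_ne_zero s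
    obtain ⟨b, n, hb⟩ := exists_mul_eq_pow p k (s : W) hs0
    refine ⟨⟨x * b, ⟨(p : W) ^ n, ⟨n, rfl⟩⟩⟩, ?_⟩
    simp only
    rw [← hb, map_mul, map_mul, ← mul_assoc, hs]
  · intro x y h
    exact ⟨1, by rw [hinj h]⟩

lemma two_isUnit : 2 < p → IsUnit (2 : W) := by
  intro h2p
  apply WittVector.isUnit_of_coeff_zero_ne_zero
  have : (2 : W) = 1 + 1 := by norm_num
  rw [this, WittVector.add_coeff_zero, WittVector.one_coeff_zero]
  have : (1 : k) + 1 = ((2 : ℕ) : k) := by push_cast; ring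
  rw [this]
  intro h
  rw [CharP.cast_eq_zero_iff k p 2] at h
  exact absurd (Nat.le_of_dvd (by norm_num) h) (not_le.mpr h2p)

end WittAux

/-- The ideal `(b - p·b², 2 - 2·p·b)` in `W(k)[b]`. -/
noncomputable def wittIdeal (p : ℕ) [Fact p.Prime] (k : Type*) [Field k] [CharP k p] :
    Ideal (Polynomial (WittVector p k)) :=
  Ideal.span {X - C (p : WittVector p k) * X ^ 2, C 2 - C (2 * (p : WittVector p k)) * X}

lemma wittIdeal_eq (p : ℕ) [Fact p.Prime] (hp : 2 < p) (k : Type*) [Field k] [CharP k p] :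
    wittIdeal p k = Ideal.span {C (p : WittVector p k) * X - 1} := by
  apply le_antisymm
  · rw [wittIdeal, Ideal.span_le]
    intro f hf
    simp only [Set.mem_insert_iff, Set.mem_singleton_iff] at hf
    rw [SetLike.mem_coe, Ideal.mem_span_singleton]
    rcases hf with rfl | rfl
    · exact ⟨-X, by ring⟩
    · exact ⟨-C 2, by rw [map_mul]; ring⟩
  · rw [Ideal.span_le, Set.singleton_subset_iff, SetLike.mem_coe]
    have hg : C (2 : WittVector p k) - C (2 * (p : WittVector p k)) * X ∈ wittIdeal p k :=
      Ideal.subset_span (by simp)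
    have h2 := WittAux.two_isUnit p k hp
    set t : WittVector p k := ((h2.unit⁻¹ : _) : WittVector p k) with ht
    have h1 : t * 2 = 1 := by
      conv_lhs => rw [← IsUnit.unit_spec h2]
      exact h2.unit.inv_mul
    have e1 : C t * C (2 : WittVector p k) = 1 := by rw [← map_mul, h1, map_one]
    have e2 : C t * C (2 * (p : WittVector p k)) = C ((p : WittVector p k)) := by
      rw [← map_mul, ← mul_assoc, h1, one_mul]
    have key : C ((p : WittVector p k)) * X - 1 =
        (-C t) * (C (2 : WittVector p k) - C (2 * (p : WittVector p k)) * X) := by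
      have expand : (-C t) * (C (2 : WittVector p k) - C (2 * (p : WittVector p k)) * X) =
          (C t * C (2 * (p : WittVector p k))) * X - C t * C (2 : WittVector p k) := by ring
      rw [expand, e1, e2]
    rw [key]
    exact Ideal.mul_mem_left _ _ hg

/-- Let `k` be a field of characteristic `p > 2` and `W = W(k)`. Then the `W`-algebra
`A = W[b]/(b - p·b², 2 - 2·p·b)` is isomorphic to `Frac(W) = W[1/p]` as a `W`-algebra,
and in particular `A` is not finitely generated as a `W`-module. -/
theorem wittIdeal_quotient_iso_fractionRing (p : ℕ) [Fact p.Prime] (hp : 2 < p)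
    (k : Type*) [Field k] [CharP k p] :
    Nonempty ((Polynomial (WittVector p k) ⧸ wittIdeal p k) ≃ₐ[WittVector p k]
        FractionRing (WittVector p k)) ∧
      ¬ Module.Finite (WittVector p k) (Polynomial (WittVector p k) ⧸ wittIdeal p k) := by
  have hIdeal := wittIdeal_eq p hp k
  haveI hloc := WittAux.isLocalization_powers p k
  let e1 : (Polynomial (WittVector p k) ⧸ wittIdeal p k) ≃ₐ[WittVector p k]
      AdjoinRoot (C ((p : WittVector p k)) * X - 1) :=
    Ideal.quotientEquivAlgOfEq (WittVector p k) hIdeal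
  let e2 : AdjoinRoot (C ((p : WittVector p k)) * X - 1) ≃ₐ[WittVector p k]
      Localization.Away ((p : WittVector p k)) :=
    (Localization.awayEquivAdjoin ((p : WittVector p k))).symm
  let e3 : Localization.Away ((p : WittVector p k)) ≃ₐ[WittVector p k]
      FractionRing (WittVector p k) :=
    IsLocalization.algEquiv (Submonoid.powers ((p : WittVector p k))) _ _
  let e : (Polynomial (WittVector p k) ⧸ wittIdeal p k) ≃ₐ[WittVector p k]
      FractionRing (WittVector p k) := e1.trans (e2.trans e3)
  refine ⟨⟨e⟩, ?_⟩
  intro hfin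
  haveI : Module.Finite (WittVector p k) (FractionRing (WittVector p k)) :=
    Module.Finite.equiv e.toLinearEquiv
  haveI : Algebra.IsIntegral (WittVector p k) (FractionRing (WittVector p k)) :=
    Algebra.IsIntegral.of_finite _ _
  have hfield : IsField (WittVector p k) :=
    (Algebra.IsIntegral.isField_iff_isField
      (IsFractionRing.injective (WittVector p k) (FractionRing (WittVector p k)))).mpr
      (Field.toIsField _)
  apply (WittVector.irreducible p (k := k)).not_isUnit
  obtain ⟨c, hc⟩ := hfield.mul_inv_cancel (WittVector.irreducible p (k := k)).ne_zero
  exact IsUnit.of_mul_eq_one _ hc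
end

section
/- Let A be a commutative graded ring, R₀ a subring of A₀, and f₁,…,f_m homogeneous elements of A of positive degrees such that A is module-finite over the subring generated by R₀ and the fᵢ. Then for any positive integers N₁,…,N_m, A is module-finite over the subring generated by R₀ and f₁^{N₁},…,f_m^{N_m}. -/
set_option synthInstance.maxHeartbeats 1000000 in
set_option maxHeartbeats 2000000 in
/-- Let `A` be a commutative graded ring, `R₀` a subring of `A₀`, and `f₁, …, f_m`
homogeneous elements of positive degrees such that `A` is module-finite over
`R₀[f₁, …, f_m]`. Then for any positive integers `N₁, …, N_m`, `A` is module-finite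
over `R₀[f₁^{N₁}, …, f_m^{N_m}]`. -/
theorem module_finite_over_powers_of_homogeneous
    {A : Type*} [CommRing A] (𝒜 : ℕ → AddSubgroup A) [GradedRing 𝒜]
    (R₀ : Subring A) (hR₀ : (R₀ : Set A) ⊆ 𝒜 0)
    {m : ℕ} (f : Fin m → A) (d : Fin m → ℕ) (hdpos : ∀ i, 0 < d i)
    (hf : ∀ i, f i ∈ 𝒜 (d i))
    (hfin : Module.Finite (Subring.closure ((R₀ : Set A) ∪ Set.range f)) A)
    (N : Fin m → ℕ) (hN : ∀ i, 0 < N i) :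
    Module.Finite (Subring.closure ((R₀ : Set A) ∪ Set.range fun i => f i ^ N i)) A := by
  set T := Subring.closure ((R₀ : Set A) ∪ Set.range fun i => f i ^ N i) with hT
  set S := Subring.closure ((R₀ : Set A) ∪ Set.range f) with hS
  -- the subalgebra of A over T generated by the f i
  set S₂ : Subalgebra T A := Algebra.adjoin T (Set.range f) with hS₂
  -- each f i is integral over T
  have hint : ∀ x ∈ Set.range f, IsIntegral T x := by
    rintro x ⟨i, rfl⟩
    have hc : f i ^ N i ∈ T := Subring.subset_closure (Or.inr ⟨i, rfl⟩)
    refine ⟨Polynomial.X ^ N i - Polynomial.C ⟨f i ^ N i, hc⟩,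
      Polynomial.monic_X_pow_sub_C _ (hN i).ne', ?_⟩
    simp [sub_eq_zero]
    rfl
  have h1 : Module.Finite T S₂ :=
    ⟨(Submodule.fg_top _).mpr <| by
      simpa [hS₂] using fg_adjoin_of_finite (Set.finite_range f) hint⟩
  have hle : ∀ x ∈ S, x ∈ S₂ := by
    intro x hx
    refine Subring.closure_induction ?_ ?_ ?_ ?_ ?_ ?_ hx
    · rintro y (hy | ⟨i, rfl⟩)
      · exact S₂.algebraMap_mem ⟨y, Subring.subset_closure (Or.inl hy)⟩
      · exact Algebra.subset_adjoin ⟨i, rfl⟩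
    · exact S₂.zero_mem
    · exact S₂.one_mem
    · exact fun a b _ _ ha hb => S₂.add_mem ha hb
    · exact fun a _ ha => S₂.neg_mem ha
    · exact fun a b _ _ ha hb => S₂.mul_mem ha hb
  have h2 : Module.Finite S₂ A := by
    obtain ⟨s, hs⟩ := hfin
    refine ⟨⟨s, top_le_iff.mp ?_⟩⟩
    intro a _
    have ha : a ∈ Submodule.span S (s : Set A) := hs ▸ Submodule.mem_top
    refine Submodule.span_induction ?_ ?_ ?_ ?_ ha
    · exact fun x hx => Submodule.subset_span hx
    · exact Submodule.zero_mem _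
    · exact fun x y _ _ hx hy => Submodule.add_mem _ hx hy
    · rintro ⟨c, hc⟩ x _ hx
      have : (⟨c, hc⟩ : S) • x = (⟨c, hle c hc⟩ : S₂) • x := rfl
      rw [this]
      exact Submodule.smul_mem (Submodule.span (↥S₂) (s : Set A)) ⟨c, hle c hc⟩ hx
  exact Module.Finite.trans S₂ A
end

section
/- Let k be a field, A a finitely generated commutative k-algebra graded by the nonnegative integers with A₀ = k, and let S be a finite group acting on A by graded k-algebra automorphisms with |S| invertible in k. Then A is module-finite over the invariant subalgebra A^S, and A^S is a finitely generated k-algebra. -/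
/-- The subalgebra of `S`-invariants of an algebra with an action of `S` by
`k`-algebra automorphisms. -/
def invariantSubalgebra (k : Type*) [CommSemiring k] (A : Type*) [CommRing A] [Algebra k A]
    (S : Type*) [Group S] [MulSemiringAction S A] [SMulCommClass S k A] :
    Subalgebra k A where
  carrier := {a : A | ∀ s : S, s • a = a}
  mul_mem' := fun {a b} ha hb s => by rw [smul_mul', ha s, hb s]
  add_mem' := fun {a b} ha hb s => by rw [smul_add, ha s, hb s]
  algebraMap_mem' := fun r s => by
    rw [Algebra.algebraMap_eq_smul_one, smul_comm, smul_one]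

/-- Every element of `A` is integral over the invariant subalgebra, being a root of
`∏ (X - s • a)`. -/
theorem isIntegral_invariantSubalgebra (k : Type*) [CommRing k] (A : Type*) [CommRing A]
    [Algebra k A] (S : Type*) [Group S] [Finite S] [MulSemiringAction S A] [SMulCommClass S k A]
    (a : A) : IsIntegral (invariantSubalgebra k A S) a := by
  cases nonempty_fintype S
  set B := invariantSubalgebra k A S with hB
  have hcoeff : ↑(prodXSubSMul S A a).coeffs ⊆ (B.toSubring : Set A) := by
    intro c hc s
    obtain ⟨n, _, hn⟩ := Polynomial.mem_coeffs_iff.1 hc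
    exact hn ▸ prodXSubSMul.coeff S A a s n
  refine ⟨(prodXSubSMul S A a).toSubring B.toSubring hcoeff, ?_, ?_⟩
  · rw [Polynomial.monic_toSubring]
    exact prodXSubSMul.monic S A a
  · have : Polynomial.eval₂ B.toSubring.subtype a
        ((prodXSubSMul S A a).toSubring B.toSubring hcoeff) = 0 := by
      rw [Polynomial.eval₂_eq_eval_map, Polynomial.map_toSubring]
      exact prodXSubSMul.eval S A a
    exact this

/-- Noether's theorem: let `k` be a field, `A` a finitely generated commutative graded
`k`-algebra with `A₀ = k`, and `S` a finite group acting on `A` by graded `k`-algebra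
automorphisms with `|S|` invertible in `k`. Then `A` is module-finite over the invariant
subalgebra `A^S`, and `A^S` is a finitely generated `k`-algebra. -/
theorem noether_finiteness_of_invariants
    (k : Type*) [Field k] (A : Type*) [CommRing A] [Algebra k A] [Algebra.FiniteType k A]
    (𝒜 : ℕ → Submodule k A) [GradedAlgebra 𝒜]
    (h0 : 𝒜 0 = (1 : Submodule k A))
    (S : Type*) [Group S] [Finite S] [MulSemiringAction S A] [SMulCommClass S k A]
    (hgraded : ∀ (s : S) (n : ℕ), ∀ a ∈ 𝒜 n, s • a ∈ 𝒜 n)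
    (hcard : (Nat.card S : k) ≠ 0) :
    Module.Finite (invariantSubalgebra k A S) A ∧
      Algebra.FiniteType k (invariantSubalgebra k A S) := by
  set B := invariantSubalgebra k A S
  have hint : Algebra.IsIntegral B A :=
    ⟨fun a => isIntegral_invariantSubalgebra k A S a⟩
  have hft : Algebra.FiniteType B A :=
    Algebra.FiniteType.of_restrictScalars_finiteType (R := k) (S := B) (A := A)
  have hfin : Module.Finite B A := Algebra.IsIntegral.finite
  refine ⟨hfin, ?_⟩
  constructor
  exact fg_of_fg_of_fg k B A
    (Algebra.FiniteType.out (R := k) (A := A))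
    hfin.fg_top
    Subtype.val_injective
end
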